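/- Let p and q be distinct odd primes. Then ∑_{i+j+k=pq, i,j,k ∈ P_p} 1/(ijk) + (2/q³)·∑_{a+b+c=p, a,b,c ∈ P_p} 1/(abc) ≡ -2(q + 2/q³)·B_{p-3} (mod p), where both sums are over ordered triples of positive integers coprime to p with the indicated sum, as a congruence of rational numbers whose denominators are coprime to p. -/

import Mathlib

open Finset

/-- `x ≡ y (mod N)` for rationals: the denominator of `x - y` is coprime to `N`
and `N` divides the numerator of `x - y`. -/
def ratCong (N : ℕ) (x y : ℚ) : Prop :=
  Nat.Coprime (x - y).den N ∧ (N : ℤ) ∣ (x - y).num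

/-- `Zp n p = ∑_{i+j+k=n, i,j,k coprime to p} 1/(ijk)` over ordered triples of
positive integers coprime to `p`. -/
def Zp (n p : ℕ) : ℚ :=
  ∑ i ∈ Finset.Icc 1 n, ∑ j ∈ Finset.Icc 1 n, ∑ k ∈ Finset.Icc 1 n,
    if i + j + k = n ∧ Nat.Coprime i p ∧ Nat.Coprime j p ∧ Nat.Coprime k p then
      1 / ((i : ℚ) * j * k)
    else 0


section Aux

variable (p : ℕ) [hpI : Fact p.Prime]

/-- Sum over `range p` of a function of the cast equals sum over `ZMod p`. -/
lemma sum_range_natCast {M : Type*} [AddCommMonoid M] (f : ZMod p → M) :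
    ∑ i ∈ range p, f (i : ZMod p) = ∑ x : ZMod p, f x := by
  have : NeZero p := ⟨hpI.out.ne_zero⟩
  refine Finset.sum_nbij' (fun i => (i : ZMod p)) (fun x => x.val) ?_ ?_ ?_ ?_ ?_
  · intro a _; exact mem_univ _
  · intro x _; exact mem_range.2 (ZMod.val_lt x)
  · intro a ha; exact ZMod.val_cast_of_lt (mem_range.1 ha)
  · intro x _; exact ZMod.natCast_rightInverse x
  · intro a _; rfl

lemma two_ne_zero'' (hp2 : p ≠ 2) : (2 : ZMod p) ≠ 0 := by
  intro h
  have h2 : ((2 : ℕ) : ZMod p) = 0 := by exact_mod_cast h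
  have : p ∣ 2 := (ZMod.natCast_eq_zero_iff 2 p).1 h2
  exact hp2 ((Nat.prime_dvd_prime_iff_eq hpI.out Nat.prime_two).1 this)

lemma sum_odd_fun (hp2 : p ≠ 2) (f : ZMod p → ZMod p) (hf : ∀ x, f (-x) = - f x) :
    ∑ x : ZMod p, f x = 0 := by
  have h : ∑ x : ZMod p, f x = ∑ x : ZMod p, f (-x) :=
    (Fintype.sum_equiv (Equiv.neg (ZMod p)) _ _ (fun x => rfl)).symm
  have h' : ∑ x : ZMod p, f x = - ∑ x : ZMod p, f x := by
    calc ∑ x : ZMod p, f x = ∑ x : ZMod p, f (-x) := h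
      _ = ∑ x : ZMod p, -f x := Finset.sum_congr rfl (fun x _ => hf x)
      _ = -∑ x : ZMod p, f x := by rw [Finset.sum_neg_distrib]
  have h3 : (2 : ZMod p) * ∑ x : ZMod p, f x = 0 := by
    rw [two_mul]; nth_rewrite 1 [h']; exact neg_add_cancel _
  rcases mul_eq_zero.1 h3 with h4 | h4
  · exact absurd h4 (two_ne_zero'' p hp2)
  · exact h4

lemma sum_inv_univ (hp2 : p ≠ 2) : ∑ x : ZMod p, x⁻¹ = 0 :=
  sum_odd_fun p hp2 _ (fun x => inv_neg)

lemma sum_inv_cube_univ (hp2 : p ≠ 2) : ∑ x : ZMod p, x⁻¹ ^ 2 * x⁻¹ = 0 :=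
  sum_odd_fun p hp2 _ (fun x => by rw [inv_neg]; ring)

/-- splitting off the `0` term -/
lemma sum_range_p_eq {M : Type*} [AddCommMonoid M] (g : ℕ → M) :
    ∑ i ∈ range p, g i = g 0 + ∑ i ∈ Icc 1 (p - 1), g i := by
  have h1 : 1 ≤ p := hpI.out.one_lt.le
  have hIcc : Icc 1 (p - 1) = Ico 1 p := by
    rw [← Finset.Ico_add_one_right_eq_Icc]
    congr 1
    omega
  rw [hIcc]
  exact Finset.sum_range_eq_add_Ico g hpI.out.pos

end Aux

section Aux2

variable (p : ℕ) [hpI : Fact p.Prime]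

lemma icc_sum_to_univ {M : Type*} [AddCommMonoid M] (g : ZMod p → M) (h0 : g 0 = 0) :
    ∑ i ∈ Icc 1 (p - 1), g (i : ZMod p) = ∑ x : ZMod p, g x := by
  rw [← sum_range_natCast p g, sum_range_p_eq p (fun i => g (i : ZMod p))]
  simp [h0]

lemma pow_sum_zero (t : ℕ) (ht0 : 0 < t) (ht : t < p - 1) :
    ∑ i ∈ Icc 1 (p - 1), (i : ZMod p) ^ t = 0 := by
  rw [icc_sum_to_univ p (fun x => x ^ t) (by simp [zero_pow ht0.ne'])]
  have : Fintype.card (ZMod p) = p := ZMod.card p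
  exact FiniteField.sum_pow_lt_card_sub_one _ t (by rw [this]; exact ht)

lemma pow_sum_full : ∑ i ∈ Icc 1 (p - 1), ((i : ZMod p)) ^ 0 = -1 := by
  simp only [pow_zero, Finset.sum_const, Nat.card_Icc, nsmul_one]
  have h1 : 1 ≤ p := hpI.out.one_lt.le
  have : p - 1 + 1 - 1 = p - 1 := by omega
  rw [this]
  have : ((p - 1 : ℕ) : ZMod p) = (p : ZMod p) - 1 := by
    push_cast [Nat.cast_sub h1]
    ring
  rw [this, ZMod.natCast_self]
  ring

lemma inv_eq_pow_sub_two (hp2 : p ≠ 2) (x : ZMod p) : x⁻¹ = x ^ (p - 2) := by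
  have h3 : 3 ≤ p := hpI.out.two_le.lt_of_ne (Ne.symm hp2)
  by_cases hx : x = 0
  · subst hx
    rw [inv_zero, zero_pow (by omega)]
  · have h1 : x * x ^ (p - 2) = 1 := by
      rw [← pow_succ']
      have : p - 2 + 1 = p - 1 := by omega
      rw [this, ZMod.pow_card_sub_one_eq_one hx]
    exact inv_eq_of_mul_eq_one_right h1

lemma inv_sq_eq_pow (hp2 : p ≠ 2) (x : ZMod p) (hx : x ≠ 0) : x⁻¹ ^ 2 = x ^ (p - 3) := by
  have h3 : 3 ≤ p := hpI.out.two_le.lt_of_ne (Ne.symm hp2)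
  rw [inv_eq_pow_sub_two p hp2, ← pow_mul]
  have : (p - 2) * 2 = (p - 3) + (p - 1) := by omega
  rw [this, pow_add, ZMod.pow_card_sub_one_eq_one hx, mul_one]

/-- periodic block summation -/
lemma sum_blocks {M : Type*} [AddCommMonoid M] (f : ℕ → M) (hf : ∀ i, f (i + p) = f i)
    (d r : ℕ) :
    ∑ i ∈ range (d * p + r), f i = d • (∑ i ∈ range p, f i) + ∑ i ∈ range r, f i := by
  induction d with
  | zero => simp
  | succ d ih =>
      have hidx : (d + 1) * p + r = p + (d * p + r) := by ring
      rw [hidx, Finset.sum_range_add]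
      have : ∀ x, f (p + x) = f x := fun x => by rw [Nat.add_comm, hf]
      rw [Finset.sum_congr rfl (fun x _ => this x), ih, succ_nsmul]
      abel

end Aux2

section RatGood

variable (p : ℕ) [hpI : Fact p.Prime]

def gd (p : ℕ) (x : ℚ) : Prop := ¬ p ∣ x.den

lemma gd_add {x y : ℚ} (hx : gd p x) (hy : gd p y) : gd p (x + y) := by
  intro h
  rcases (Nat.Prime.dvd_mul hpI.out).1 (h.trans (Rat.add_den_dvd x y)) with h' | h'
  · exact hx h'
  · exact hy h'

lemma gd_mul {x y : ℚ} (hx : gd p x) (hy : gd p y) : gd p (x * y) := by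
  intro h
  rcases (Nat.Prime.dvd_mul hpI.out).1 (h.trans (Rat.mul_den_dvd x y)) with h' | h'
  · exact hx h'
  · exact hy h'

lemma gd_neg {x : ℚ} (hx : gd p x) : gd p (-x) := by
  unfold gd at *
  rwa [Rat.neg_den]

lemma gd_sub {x y : ℚ} (hx : gd p x) (hy : gd p y) : gd p (x - y) := by
  rw [sub_eq_add_neg]; exact gd_add p hx (gd_neg p hy)

lemma gd_int (n : ℤ) : gd p (n : ℚ) := by
  unfold gd
  rw [Rat.den_intCast]
  exact fun h => hpI.out.one_lt.ne' (Nat.dvd_one.1 h)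

lemma gd_nat (n : ℕ) : gd p (n : ℚ) := by
  have := gd_int p (n : ℤ)
  push_cast at this
  exact this

lemma gd_den_ne_zero {x : ℚ} (hx : gd p x) : ((x.den : ZMod p)) ≠ 0 := by
  intro h
  exact hx ((ZMod.natCast_eq_zero_iff _ p).1 h)

lemma gd_cast_add {x y : ℚ} (hx : gd p x) (hy : gd p y) :
    ((x + y : ℚ) : ZMod p) = (x : ZMod p) + (y : ZMod p) :=
  Rat.cast_add_of_ne_zero (gd_den_ne_zero p hx) (gd_den_ne_zero p hy)

lemma gd_cast_mul {x y : ℚ} (hx : gd p x) (hy : gd p y) :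
    ((x * y : ℚ) : ZMod p) = (x : ZMod p) * (y : ZMod p) :=
  Rat.cast_mul_of_ne_zero (gd_den_ne_zero p hx) (gd_den_ne_zero p hy)

lemma gd_cast_sub {x y : ℚ} (hx : gd p x) (hy : gd p y) :
    ((x - y : ℚ) : ZMod p) = (x : ZMod p) - (y : ZMod p) :=
  Rat.cast_sub_of_ne_zero (gd_den_ne_zero p hx) (gd_den_ne_zero p hy)

lemma gd_inv_nat {n : ℕ} (hn : ¬ p ∣ n) : gd p ((n : ℚ)⁻¹) := by
  have hn0 : 0 < n := by
    rcases Nat.eq_zero_or_pos n with h | h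
    · exact absurd (h ▸ dvd_zero p) hn
    · exact h
  unfold gd
  rw [Rat.inv_natCast_den_of_pos hn0]
  exact hn

/-- goodness and cast of finite sums -/
lemma gd_sum {ι : Type*} (s : Finset ι) (f : ι → ℚ) (h : ∀ i ∈ s, gd p (f i)) :
    gd p (∑ i ∈ s, f i) ∧ ((∑ i ∈ s, f i : ℚ) : ZMod p) = ∑ i ∈ s, ((f i : ℚ) : ZMod p) := by
  classical
  induction s using Finset.induction_on with
  | empty =>
      constructor
      · simp only [Finset.sum_empty]
        exact gd_nat p 0
      · simp
  | @insert a s ha ih =>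
      have h1 : gd p (f a) := h a (mem_insert_self a s)
      have h2 : ∀ i ∈ s, gd p (f i) := fun i hi => h i (mem_insert_of_mem hi)
      obtain ⟨ihg, ihc⟩ := ih h2
      rw [Finset.sum_insert ha, Finset.sum_insert ha]
      exact ⟨gd_add p h1 ihg, by rw [gd_cast_add p h1 ihg, ihc]⟩

end RatGood

section Bern

variable (p : ℕ) [hpI : Fact p.Prime]

lemma gd_bernoulli : ∀ j, j ≤ p - 2 → gd p (bernoulli j) := by
  intro j
  induction j using Nat.strong_induction_on with
  | _ j ih =>
    intro hj
    match j with
    | 0 => simpa [bernoulli_zero] using gd_nat p 1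
    | (j + 1) =>
      have hp3 : 2 ≤ p := hpI.out.two_le
      have hsum := sum_bernoulli (j + 2)
      rw [if_neg (by omega), Finset.sum_range_succ] at hsum
      have hch : ((j + 2).choose (j + 1) : ℚ) = (j + 2 : ℚ) := by
        rw [Nat.choose_succ_self_right]
        push_cast; ring
      rw [hch] at hsum
      have hB : bernoulli (j + 1) =
          -(∑ k ∈ range (j + 1), ((j + 2).choose k : ℚ) * bernoulli k) * ((j + 2 : ℕ) : ℚ)⁻¹ := by
        have h2 : ((j + 2 : ℕ) : ℚ) ≠ 0 := by positivity
        field_simp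
        push_cast
        linear_combination hsum
      rw [hB]
      refine gd_mul p (gd_neg p ?_) (gd_inv_nat p ?_)
      · refine (gd_sum p _ _ (fun k hk => ?_)).1
        have hk' : k < j + 1 := mem_range.1 hk
        exact gd_mul p (gd_nat p _) (ih k (by omega) (by omega))
      · intro hdvd
        have := Nat.le_of_dvd (by omega) hdvd
        omega

end Bern

section Core

def Hs (p t : ℕ) : ZMod p := ∑ i ∈ range t, (i : ZMod p)⁻¹

def Dd (p : ℕ) : ZMod p := ∑ w ∈ Icc 1 (p - 1), ((w : ZMod p))⁻¹ ^ 2 * Hs p w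

def fA (p s i : ℕ) : ZMod p :=
  if ((i : ZMod p) ≠ 0 ∧ (i : ZMod p) ≠ (s : ZMod p)) then (i : ZMod p)⁻¹ else 0

def Am (p s : ℕ) : ZMod p := ∑ i ∈ range s, fA p s i

def S2m (p n s : ℕ) : ZMod p :=
  ∑ i ∈ Icc 1 n, ∑ j ∈ Icc 1 n,
    if (i + j = s ∧ ¬ p ∣ i ∧ ¬ p ∣ j) then ((i : ZMod p) * (j : ZMod p))⁻¹ else 0

def Zm (p n : ℕ) : ZMod p :=
  ∑ i ∈ Icc 1 n, ∑ j ∈ Icc 1 n, ∑ k ∈ Icc 1 n,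
    if (i + j + k = n ∧ ¬ p ∣ i ∧ ¬ p ∣ j ∧ ¬ p ∣ k) then
      ((i : ZMod p) * (j : ZMod p) * (k : ZMod p))⁻¹ else 0

variable (p : ℕ) [hpI : Fact p.Prime]

lemma L1 (n : ℕ) :
    Zm p n = ∑ k ∈ Icc 1 n, if ¬ p ∣ k then (k : ZMod p)⁻¹ * S2m p n (n - k) else 0 := by
  unfold Zm
  rw [Finset.sum_congr rfl (fun i _ => Finset.sum_comm), Finset.sum_comm]
  refine Finset.sum_congr rfl (fun k hk => ?_)
  obtain ⟨hk1, hkn⟩ := Finset.mem_Icc.1 hk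
  by_cases hpk : p ∣ k
  · simp [hpk]
  · rw [if_pos hpk]
    unfold S2m
    rw [Finset.mul_sum]
    refine Finset.sum_congr rfl (fun i _ => ?_)
    rw [Finset.mul_sum]
    refine Finset.sum_congr rfl (fun j _ => ?_)
    rw [mul_ite, mul_zero]
    refine if_congr ?_ ?_ rfl
    · constructor
      · rintro ⟨h1, h2, h3, -⟩
        exact ⟨by omega, h2, h3⟩
      · rintro ⟨h1, h2, h3⟩
        exact ⟨by omega, h2, h3, hpk⟩
    · rw [mul_inv_rev]


def fB (p s i : ℕ) : ZMod p :=
  if ((i : ZMod p) ≠ 0 ∧ (i : ZMod p) ≠ (s : ZMod p)) then ((s : ZMod p) - (i : ZMod p))⁻¹ else 0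

lemma fA_top (s : ℕ) : fA p s s = 0 := by
  unfold fA
  rw [if_neg]
  rintro ⟨-, h⟩
  exact h rfl

lemma fB_top (s : ℕ) : fB p s s = 0 := by
  unfold fB
  rw [if_neg]
  rintro ⟨-, h⟩
  exact h rfl

lemma Bm_eq_Am (s : ℕ) : ∑ i ∈ range s, fB p s i = Am p s := by
  unfold Am
  have hA : ∑ i ∈ range s, fA p s i = ∑ i ∈ range (s + 1), fA p s i := by
    rw [Finset.sum_range_succ, fA_top, add_zero]
  have hB : ∑ i ∈ range s, fB p s i = ∑ i ∈ range (s + 1), fB p s i := by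
    rw [Finset.sum_range_succ, fB_top, add_zero]
  rw [hA, hB, ← Finset.sum_range_reflect (fun i => fB p s i) (s + 1)]
  refine Finset.sum_congr rfl (fun j hj => ?_)
  have hjs : j ≤ s := by have := mem_range.1 hj; omega
  have hidx : s + 1 - 1 - j = s - j := by omega
  rw [hidx]
  have hc : ((s - j : ℕ) : ZMod p) = (s : ZMod p) - (j : ZMod p) := by
    push_cast [Nat.cast_sub hjs]; ring
  unfold fA fB
  rw [hc]
  by_cases h1 : (j : ZMod p) = 0
  · rw [if_neg (by rintro ⟨-, h⟩; exact h (by rw [h1, sub_zero])),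
      if_neg (by rintro ⟨h, -⟩; exact h h1)]
  · by_cases h2 : (j : ZMod p) = (s : ZMod p)
    · rw [if_neg (by rintro ⟨h, -⟩; exact h (by rw [h2, sub_self])),
        if_neg (by rintro ⟨-, h⟩; exact h h2)]
    · rw [if_pos ⟨sub_ne_zero.2 (Ne.symm h2), fun h => h1 (sub_eq_self.1 h)⟩, if_pos ⟨h1, h2⟩,
        sub_sub_cancel]

lemma L2 (n s : ℕ) (hs1 : 1 ≤ s) (hsn : s ≤ n) (hps : ¬ p ∣ s) :
    S2m p n s = 2 * (s : ZMod p)⁻¹ * Am p s := by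
  classical
  set g : ℕ → ZMod p := fun i =>
    if (i < s ∧ ¬ p ∣ i ∧ ¬ p ∣ (s - i)) then ((i : ZMod p) * ((s - i : ℕ) : ZMod p))⁻¹ else 0
    with hg
  have step1 : S2m p n s = ∑ i ∈ Icc 1 n, g i := by
    unfold S2m
    refine Finset.sum_congr rfl (fun i _ => ?_)
    rw [Finset.sum_eq_single (s - i)]
    · refine if_congr ⟨?_, ?_⟩ rfl rfl
      · rintro ⟨h1, h2, h3⟩
        have hne : i ≠ s := by
          intro he
          exact h3 (by rw [he, Nat.sub_self]; exact dvd_zero p)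
        exact ⟨by omega, h2, h3⟩
      · rintro ⟨h1, h2, h3⟩
        exact ⟨by omega, h2, h3⟩
    · intro j hj hne
      rw [if_neg]
      rintro ⟨h1, -, -⟩
      have hj1 := (Finset.mem_Icc.1 hj).1
      exact hne (by omega)
    · intro hnm
      rw [if_neg]
      rintro ⟨h1, -, h3⟩
      have hsi : s - i ≤ n := by omega
      have : ¬ 1 ≤ s - i := fun hge => hnm (Finset.mem_Icc.2 ⟨hge, hsi⟩)
      have hzero : s - i = 0 := by omega
      exact h3 (by rw [hzero]; exact dvd_zero p)
  have hg0 : ∀ i, s ≤ i → g i = 0 := by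
    intro i hi
    rw [hg]
    simp only
    rw [if_neg]
    rintro ⟨h1, -, -⟩
    omega
  have hgz : g 0 = 0 := by
    rw [hg]
    simp only
    rw [if_neg]
    rintro ⟨-, h2, -⟩
    exact h2 (dvd_zero p)
  have step2 : ∑ i ∈ Icc 1 n, g i = ∑ i ∈ range s, g i := by
    have e1 : ∑ i ∈ Icc 1 n, g i = ∑ i ∈ range (n + 1), g i :=
      Finset.sum_subset
        (fun x hx => mem_range.2 (by have := (Finset.mem_Icc.1 hx).2; omega))
        (fun x hx hnx => by
          have hx0 : x = 0 := by
            have h1 := mem_range.1 hx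
            by_contra h
            exact hnx (Finset.mem_Icc.2 ⟨by omega, by omega⟩)
          rw [hx0]; exact hgz)
    have e2 : ∑ i ∈ range s, g i = ∑ i ∈ range (n + 1), g i :=
      Finset.sum_subset (Finset.range_subset_range.2 (by omega))
        (fun x _ hnx => hg0 x (by by_contra h; exact hnx (mem_range.2 (by omega))))
    rw [e1, ← e2]
  have step3 : ∀ i ∈ range s, g i = (s : ZMod p)⁻¹ * (fA p s i + fB p s i) := by
    intro i hi
    have his : i < s := mem_range.1 hi
    have hc : ((s - i : ℕ) : ZMod p) = (s : ZMod p) - (i : ZMod p) := by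
      push_cast [Nat.cast_sub his.le]; ring
    have hσ : (s : ZMod p) ≠ 0 := fun h => hps ((ZMod.natCast_eq_zero_iff s p).1 h)
    rw [hg]
    unfold fA fB
    simp only
    by_cases hpi : p ∣ i
    · have h0 : (i : ZMod p) = 0 := (ZMod.natCast_eq_zero_iff i p).2 hpi
      rw [if_neg (by rintro ⟨-, h, -⟩; exact h hpi),
        if_neg (by rintro ⟨h, -⟩; exact h h0),
        if_neg (by rintro ⟨h, -⟩; exact h h0)]
      simp
    · by_cases hpsi : p ∣ (s - i)
      · have h2 : (i : ZMod p) = (s : ZMod p) := by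
          have h0 : ((s - i : ℕ) : ZMod p) = 0 :=
            (ZMod.natCast_eq_zero_iff (s - i) p).2 hpsi
          rw [hc] at h0
          exact (sub_eq_zero.1 h0).symm
        rw [if_neg (by rintro ⟨-, -, h⟩; exact h hpsi),
          if_neg (by rintro ⟨-, h⟩; exact h h2),
          if_neg (by rintro ⟨-, h⟩; exact h h2)]
        simp
      · have h1 : (i : ZMod p) ≠ 0 := fun h => hpi ((ZMod.natCast_eq_zero_iff i p).1 h)
        have h2 : (i : ZMod p) ≠ (s : ZMod p) := by
          intro h
          apply hpsi
          rw [← ZMod.natCast_eq_zero_iff, hc, h, sub_self]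
        rw [if_pos ⟨his, hpi, hpsi⟩, if_pos ⟨h1, h2⟩, if_pos ⟨h1, h2⟩, hc]
        have hb : (s : ZMod p) - (i : ZMod p) ≠ 0 := sub_ne_zero.2 (Ne.symm h2)
        field_simp
        ring
  rw [step1, step2, Finset.sum_congr rfl step3, ← Finset.mul_sum, Finset.sum_add_distrib,
    Bm_eq_Am]
  show (s : ZMod p)⁻¹ * (Am p s + Am p s) = 2 * (s : ZMod p)⁻¹ * Am p s
  ring


lemma fA_periodic (s i : ℕ) : fA p s (i + p) = fA p s i := by
  unfold fA
  have h : ((i + p : ℕ) : ZMod p) = (i : ZMod p) := by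
    push_cast [ZMod.natCast_self]
    ring
  rw [h]

lemma full_block (hp2 : p ≠ 2) (s : ℕ) (hps : ¬ p ∣ s) :
    ∑ i ∈ range p, fA p s i = -(s : ZMod p)⁻¹ := by
  have h : ∑ i ∈ range p, fA p s i =
      ∑ x : ZMod p, (if (x ≠ 0 ∧ x ≠ (s : ZMod p)) then x⁻¹ else 0) :=
    sum_range_natCast p (fun x => if (x ≠ 0 ∧ x ≠ (s : ZMod p)) then x⁻¹ else 0)
  rw [h]
  have hpt : ∀ x : ZMod p, (if (x ≠ 0 ∧ x ≠ (s : ZMod p)) then x⁻¹ else 0)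
      = x⁻¹ - (if x = (s : ZMod p) then x⁻¹ else 0) := by
    intro x
    by_cases h2 : x = (s : ZMod p)
    · rw [if_neg (by rintro ⟨-, h⟩; exact h h2), if_pos h2]
      ring
    · by_cases h1 : x = 0
      · rw [h1, if_neg (by rintro ⟨h, -⟩; exact h rfl), if_neg (by rw [← h1]; exact h2),
          inv_zero, sub_zero]
      · rw [if_pos ⟨h1, h2⟩, if_neg h2, sub_zero]
  rw [Finset.sum_congr rfl (fun x _ => hpt x), Finset.sum_sub_distrib, sum_inv_univ p hp2,
    Finset.sum_ite_eq' univ ((s : ZMod p)) (fun x => x⁻¹), if_pos (mem_univ _)]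
  ring

lemma partial_block (s r : ℕ) (hrlt : r < p) (hsr : (s : ZMod p) = (r : ZMod p)) :
    ∑ i ∈ range r, fA p s i = Hs p r := by
  unfold Hs
  refine Finset.sum_congr rfl (fun i hi => ?_)
  have hir : i < r := mem_range.1 hi
  unfold fA
  by_cases h0 : i = 0
  · rw [if_neg (by rintro ⟨h, -⟩; exact h (by rw [h0, Nat.cast_zero])), h0, Nat.cast_zero,
      inv_zero]
  · have h1 : (i : ZMod p) ≠ 0 := by
      intro h
      have := (ZMod.natCast_eq_zero_iff i p).1 h
      have := Nat.le_of_dvd (by omega) this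
      omega
    have h2 : (i : ZMod p) ≠ (s : ZMod p) := by
      rw [hsr]
      intro h
      have h1v := ZMod.val_cast_of_lt (show i < p by omega)
      have h2v := ZMod.val_cast_of_lt hrlt
      have : i = r := by rw [← h1v, ← h2v, h]
      omega
    rw [if_pos ⟨h1, h2⟩]

lemma L3 (hp2 : p ≠ 2) (s : ℕ) (hps : ¬ p ∣ s) :
    Am p s = (s / p) • (-(s : ZMod p)⁻¹) + Hs p (s % p) := by
  have hd : s / p * p + s % p = s := by
    rw [Nat.mul_comm]
    exact Nat.div_add_mod s p
  have hsr : (s : ZMod p) = ((s % p : ℕ) : ZMod p) := by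
    conv_lhs => rw [← hd]
    push_cast [ZMod.natCast_self]
    ring
  unfold Am
  rw [show (range s) = range (s / p * p + s % p) from by rw [hd]]
  rw [sum_blocks p _ (fA_periodic p s) (s / p) (s % p), full_block p hp2 s hps,
    partial_block p s (s % p) (Nat.mod_lt s hpI.out.pos) hsr]


lemma S3_zero (hp2 : p ≠ 2) : ∑ v ∈ Icc 1 (p - 1), ((v : ZMod p)⁻¹ ^ 2 * (v : ZMod p)⁻¹) = 0 := by
  rw [icc_sum_to_univ p (fun x => x⁻¹ ^ 2 * x⁻¹) (by simp)]
  exact sum_inv_cube_univ p hp2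

lemma Dref : ∑ v ∈ Icc 1 (p - 1), ((v : ZMod p)⁻¹ ^ 2 * Hs p (p - v)) = Dd p := by
  have hp1 : 1 ≤ p := hpI.out.one_lt.le
  unfold Dd
  refine Finset.sum_nbij' (fun v => p - v) (fun w => p - w) ?_ ?_ ?_ ?_ ?_
  · intro v hv
    obtain ⟨h1, h2⟩ := Finset.mem_Icc.1 hv
    exact Finset.mem_Icc.2 ⟨by omega, by omega⟩
  · intro w hw
    obtain ⟨h1, h2⟩ := Finset.mem_Icc.1 hw
    exact Finset.mem_Icc.2 ⟨by omega, by omega⟩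
  · intro v hv
    obtain ⟨h1, h2⟩ := Finset.mem_Icc.1 hv
    omega
  · intro w hw
    obtain ⟨h1, h2⟩ := Finset.mem_Icc.1 hw
    omega
  · intro v hv
    obtain ⟨h1, h2⟩ := Finset.mem_Icc.1 hv
    have hc : ((p - v : ℕ) : ZMod p) = -(v : ZMod p) := by
      push_cast [Nat.cast_sub (by omega : v ≤ p), ZMod.natCast_self]
      ring
    rw [hc, inv_neg, neg_sq]

lemma L4 (hp2 : p ≠ 2) (m : ℕ) : Zm p (p * m) = -(2 * (m : ZMod p) * Dd p) := by
  classical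
  have hp0 : 0 < p := hpI.out.pos
  have hp1 : 1 < p := hpI.out.one_lt
  set n := p * m with hn
  rw [L1 p n]
  rw [← Finset.sum_filter (fun k => ¬ p ∣ k)
    (fun k => (k : ZMod p)⁻¹ * S2m p n (n - k))]
  have key : ∀ k ∈ (Icc 1 n).filter (fun k => ¬ p ∣ k),
      (k : ZMod p)⁻¹ * S2m p n (n - k) =
        -2 * ((k % p : ℕ) : ZMod p)⁻¹ ^ 2 *
          (((n - k) / p) • ((k % p : ℕ) : ZMod p)⁻¹ + Hs p ((n - k) % p)) := by
    intro k hk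
    obtain ⟨hk1, hpk⟩ := Finset.mem_filter.1 hk
    obtain ⟨hk1', hkn⟩ := Finset.mem_Icc.1 hk1
    have hkltn : k < n := by
      rcases Nat.lt_or_ge k n with h | h
      · exact h
      · exfalso
        have : k = n := by omega
        exact hpk (this ▸ Dvd.intro m rfl)
    have hs1 : 1 ≤ n - k := by omega
    have hsn : n - k ≤ n := by omega
    have hpnk : ¬ p ∣ (n - k) := by
      intro h
      have h2 : p ∣ n := Dvd.intro m rfl
      have h3 : p ∣ k := by
        have := Nat.dvd_sub h2 h
        have he : n - (n - k) = k := by omega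
        rwa [he] at this
      exact hpk h3
    rw [L2 p n (n - k) hs1 hsn hpnk, L3 p hp2 (n - k) hpnk]
    -- cast facts
    have hkc : (k : ZMod p) = ((k % p : ℕ) : ZMod p) := by
      conv_lhs => rw [show k = p * (k / p) + k % p from (Nat.div_add_mod k p).symm]
      push_cast [ZMod.natCast_self]
      ring
    have hnkc : ((n - k : ℕ) : ZMod p) = -((k % p : ℕ) : ZMod p) := by
      push_cast [Nat.cast_sub (show k ≤ p * m from hkltn.le), hn, ZMod.natCast_self, ← hkc]
      ring
    rw [hnkc, hkc, inv_neg, neg_neg]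
    ring
  rw [Finset.sum_congr rfl key]
  -- reindex by (u, v) with k = p * u + v
  have hbij : ∑ k ∈ (Icc 1 n).filter (fun k => ¬ p ∣ k),
      (-2 * ((k % p : ℕ) : ZMod p)⁻¹ ^ 2 *
        (((n - k) / p) • ((k % p : ℕ) : ZMod p)⁻¹ + Hs p ((n - k) % p))) =
      ∑ x ∈ range m ×ˢ Icc 1 (p - 1),
        (-2 * ((x.2 : ℕ) : ZMod p)⁻¹ ^ 2 *
          ((m - x.1 - 1) • ((x.2 : ℕ) : ZMod p)⁻¹ + Hs p (p - x.2))) := by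
    refine Finset.sum_nbij' (fun k => (k / p, k % p)) (fun x => p * x.1 + x.2) ?_ ?_ ?_ ?_ ?_
    · intro k hk
      obtain ⟨hk1, hpk⟩ := Finset.mem_filter.1 hk
      obtain ⟨hk1', hkn⟩ := Finset.mem_Icc.1 hk1
      have hkltn : k < n := by
        rcases Nat.lt_or_ge k n with h | h
        · exact h
        · exact absurd ((by omega : k = n) ▸ (Dvd.intro m rfl)) hpk
      have hmod : k % p ≠ 0 := fun h => hpk (Nat.dvd_of_mod_eq_zero h)
      have hmodlt : k % p < p := Nat.mod_lt k hp0
      have hmp : m * p = p * m := Nat.mul_comm m p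
      refine Finset.mem_product.2 ⟨mem_range.2 ?_, Finset.mem_Icc.2 ⟨by omega, by omega⟩⟩
      exact Nat.div_lt_of_lt_mul (by omega)
    · intro x hx
      obtain ⟨hx1, hx2⟩ := Finset.mem_product.1 hx
      have hu : x.1 < m := mem_range.1 hx1
      obtain ⟨hv1, hv2⟩ := Finset.mem_Icc.1 hx2
      have hkub : p * x.1 + x.2 < p * m := by
        have h1 : p * (x.1 + 1) ≤ p * m := Nat.mul_le_mul_left p (by omega)
        have h2 : p * (x.1 + 1) = p * x.1 + p := by ring
        omega
      refine Finset.mem_filter.2 ⟨Finset.mem_Icc.2 ⟨by omega, by omega⟩, ?_⟩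
      intro h
      have h2 : p ∣ x.2 := (Nat.dvd_add_right (Dvd.intro x.1 rfl)).1 h
      have := Nat.le_of_dvd (by omega) h2
      omega
    · intro k hk
      dsimp only
      exact Nat.div_add_mod k p
    · intro x hx
      obtain ⟨hx1, hx2⟩ := Finset.mem_product.1 hx
      obtain ⟨hv1, hv2⟩ := Finset.mem_Icc.1 hx2
      have e1 : (p * x.1 + x.2) / p = x.1 := by
        rw [Nat.mul_add_div hp0, Nat.div_eq_of_lt (by omega)]
        omega
      have e2 : (p * x.1 + x.2) % p = x.2 := by
        rw [Nat.mul_add_mod, Nat.mod_eq_of_lt (by omega)]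
      rw [e1, e2]
    · intro k hk
      dsimp only
      obtain ⟨hk1, hpk⟩ := Finset.mem_filter.1 hk
      obtain ⟨hk1', hkn⟩ := Finset.mem_Icc.1 hk1
      have hkltn : k < n := by
        rcases Nat.lt_or_ge k n with h | h
        · exact h
        · exact absurd ((by omega : k = n) ▸ (Dvd.intro m rfl)) hpk
      have hmod : k % p ≠ 0 := fun h => hpk (Nat.dvd_of_mod_eq_zero h)
      have hmodlt : k % p < p := Nat.mod_lt k hp0
      have hdm := Nat.div_add_mod k p
      have hmp : m * p = p * m := Nat.mul_comm m p
      have hdivlt : k / p < m := Nat.div_lt_of_lt_mul (by omega)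
      have he : n - k = p * (m - k / p - 1) + (p - k % p) := by
        have h4 : p * ((m - k / p - 1) + (k / p) + 1) = p * m := by
          rw [show (m - k / p - 1) + (k / p) + 1 = m from by omega]
        have h5 : p * ((m - k / p - 1) + (k / p) + 1) =
            p * (m - k / p - 1) + p * (k / p) + p := by ring
        omega
      have ed : (n - k) / p = m - k / p - 1 := by
        rw [he, Nat.mul_add_div hp0]
        have hz : (p - k % p) / p = 0 := Nat.div_eq_of_lt (by omega)
        rw [hz]
        omega
      have em : (n - k) % p = p - k % p := by
        rw [he, Nat.mul_add_mod]
        exact Nat.mod_eq_of_lt (by omega)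
      rw [ed, em]
  rw [hbij, Finset.sum_product]
  have inner : ∀ u ∈ range m,
      (∑ v ∈ Icc 1 (p - 1),
        (-2 * ((v : ℕ) : ZMod p)⁻¹ ^ 2 *
          ((m - u - 1) • ((v : ℕ) : ZMod p)⁻¹ + Hs p (p - v)))) = -(2 * Dd p) := by
    intro u _
    have expand : ∀ v ∈ Icc 1 (p - 1),
        (-2 * ((v : ℕ) : ZMod p)⁻¹ ^ 2 *
          ((m - u - 1) • ((v : ℕ) : ZMod p)⁻¹ + Hs p (p - v))) =
        (-2 * ((m - u - 1 : ℕ) : ZMod p)) * ((v : ZMod p)⁻¹ ^ 2 * (v : ZMod p)⁻¹)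
          + (-2) * ((v : ZMod p)⁻¹ ^ 2 * Hs p (p - v)) := by
      intro v _
      rw [nsmul_eq_mul]
      ring
    rw [Finset.sum_congr rfl expand, Finset.sum_add_distrib, ← Finset.mul_sum, ← Finset.mul_sum,
      S3_zero p hp2, Dref p, mul_zero, zero_add]
    ring
  rw [Finset.sum_congr rfl inner, Finset.sum_const, card_range, nsmul_eq_mul]
  ring


section StageC

variable (p : ℕ) [hpI : Fact p.Prime]

lemma cast_p_sub_one : ((p - 1 : ℕ) : ZMod p) = -1 := by
  push_cast [Nat.cast_sub hpI.out.one_lt.le, ZMod.natCast_self]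
  ring

lemma cast_p_sub_two (hp2 : p ≠ 2) : ((p - 2 : ℕ) : ZMod p) = -2 := by
  have h3 : 3 ≤ p := hpI.out.two_le.lt_of_ne (Ne.symm hp2)
  push_cast [Nat.cast_sub (by omega : 2 ≤ p), ZMod.natCast_self]
  ring

lemma choose_cast_eq_one (hp2 : p ≠ 2) : (((p - 1).choose (p - 3) : ℕ) : ZMod p) = 1 := by
  have h3 : 3 ≤ p := hpI.out.two_le.lt_of_ne (Ne.symm hp2)
  have h1 : (p - 1).choose (p - 3) = (p - 1).choose 2 := by
    have := Nat.choose_symm (show 2 ≤ p - 1 by omega) (n := p - 1)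
    rwa [show p - 1 - 2 = p - 3 from by omega] at this
  have h2 : (p - 1).choose 2 * 2 = (p - 1) * (p - 2) := by
    rw [Nat.choose_two_right]
    rw [show p - 1 - 1 = p - 2 from by omega]
    refine Nat.div_mul_cancel ?_
    have he : Even ((p - 2) * (p - 2 + 1)) := Nat.even_mul_succ_self (p - 2)
    rw [show p - 2 + 1 = p - 1 from by omega, Nat.mul_comm] at he
    exact he.two_dvd
  have hcast : (((p - 1).choose 2 : ℕ) : ZMod p) * 2 = 2 := by
    have := congrArg (fun t : ℕ => (t : ZMod p)) h2
    push_cast at this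
    rw [cast_p_sub_one, cast_p_sub_two p hp2] at this
    rw [this]
    ring
  have h2ne : (2 : ZMod p) ≠ 0 := two_ne_zero'' p hp2
  rw [h1]
  have := mul_right_cancel₀ h2ne (hcast.trans (one_mul (2 : ZMod p)).symm)
  exact this

lemma Ti_eval (hp2 : p ≠ 2) (i : ℕ) (hi : i < p - 1) :
    ∑ w ∈ Icc 1 (p - 1), (w : ZMod p) ^ (p - 3 + (p - 1 - i)) =
      if i = p - 3 then -1 else 0 := by
  have h3 : 3 ≤ p := hpI.out.two_le.lt_of_ne (Ne.symm hp2)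
  rcases Nat.lt_or_ge i (p - 2) with hlt | hge
  · -- i ≤ p - 3
    have hred : ∀ w ∈ Icc 1 (p - 1),
        (w : ZMod p) ^ (p - 3 + (p - 1 - i)) = (w : ZMod p) ^ (p - 3 - i) := by
      intro w hw
      obtain ⟨hw1, hw2⟩ := Finset.mem_Icc.1 hw
      have hwne : (w : ZMod p) ≠ 0 := by
        intro h
        have := Nat.le_of_dvd (by omega) ((ZMod.natCast_eq_zero_iff w p).1 h)
        omega
      rw [show p - 3 + (p - 1 - i) = (p - 3 - i) + (p - 1) from by omega, pow_add,
        ZMod.pow_card_sub_one_eq_one hwne, mul_one]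
    rw [Finset.sum_congr rfl hred]
    rcases Nat.eq_or_lt_of_le (show i ≤ p - 3 from by omega) with heq | hlt3
    · rw [if_pos heq, show p - 3 - i = 0 from by omega]
      exact pow_sum_full p
    · rw [if_neg (by omega)]
      exact pow_sum_zero p (p - 3 - i) (by omega) (by omega)
  · -- i = p - 2
    have hieq : i = p - 2 := by omega
    rw [if_neg (by omega), show p - 3 + (p - 1 - i) = p - 2 from by omega]
    exact pow_sum_zero p (p - 2) (by omega) (by omega)

lemma Dd_eq_bernoulli (hp2 : p ≠ 2) : Dd p = ((bernoulli (p - 3) : ℚ) : ZMod p) := by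
  have h3 : 3 ≤ p := hpI.out.two_le.lt_of_ne (Ne.symm hp2)
  have hpm1 : ¬ p ∣ (p - 1) := fun h => by
    have := Nat.le_of_dvd (by omega) h
    omega
  -- Hs as cast of a natural number power sum, then Faulhaber
  have hHs : ∀ w : ℕ, Hs p w = ∑ i ∈ range (p - 1),
      ((bernoulli i : ℚ) : ZMod p) * (((p - 1).choose i * w ^ (p - 1 - i) : ℕ) : ZMod p) *
        ((p - 1 : ℕ) : ZMod p)⁻¹ := by
    intro w
    have e1 : Hs p w = ((∑ i ∈ range w, i ^ (p - 2) : ℕ) : ZMod p) := by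
      unfold Hs
      push_cast
      refine Finset.sum_congr rfl (fun i _ => ?_)
      exact inv_eq_pow_sub_two p hp2 _
    have e2 : ((∑ i ∈ range w, i ^ (p - 2) : ℕ) : ℚ) =
        ∑ i ∈ range (p - 1), bernoulli i *
          (((p - 1).choose i * w ^ (p - 1 - i) : ℕ) : ℚ) * ((p - 1 : ℕ) : ℚ)⁻¹ := by
      have := _root_.sum_range_pow w (p - 2)
      rw [show p - 2 + 1 = p - 1 from by omega] at this
      push_cast
      rw [this]
      refine Finset.sum_congr rfl (fun i _ => ?_)
      push_cast
      rw [div_eq_mul_inv,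
        show ((p - 1 : ℕ) : ℚ) = 1 + ((p - 2 : ℕ) : ℚ) from by
          push_cast [Nat.cast_sub (show (1 : ℕ) ≤ p from by omega),
            Nat.cast_sub (show (2 : ℕ) ≤ p from by omega)]
          ring]
      ring
    have hterm : ∀ i ∈ range (p - 1),
        gd p (bernoulli i * (((p - 1).choose i * w ^ (p - 1 - i) : ℕ) : ℚ) *
          ((p - 1 : ℕ) : ℚ)⁻¹) := by
      intro i hi
      have hi' : i < p - 1 := mem_range.1 hi
      exact gd_mul p (gd_mul p (gd_bernoulli p i (by omega)) (gd_nat p _)) (gd_inv_nat p hpm1)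
    have e3 := (gd_sum p (range (p - 1)) _ hterm).2
    have e4 : ((∑ i ∈ range w, i ^ (p - 2) : ℕ) : ZMod p) =
        (((∑ i ∈ range w, i ^ (p - 2) : ℕ) : ℚ) : ZMod p) := (Rat.cast_natCast _).symm
    rw [e1, e4, e2, e3]
    refine Finset.sum_congr rfl (fun i hi => ?_)
    have hi' : i < p - 1 := mem_range.1 hi
    rw [gd_cast_mul p (gd_mul p (gd_bernoulli p i (by omega)) (gd_nat p _)) (gd_inv_nat p hpm1),
      gd_cast_mul p (gd_bernoulli p i (by omega)) (gd_nat p _), Rat.cast_natCast,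
      Rat.cast_inv_nat]
  -- expand Dd
  unfold Dd
  have hstep : ∀ w ∈ Icc 1 (p - 1), (w : ZMod p)⁻¹ ^ 2 * Hs p w =
      ∑ i ∈ range (p - 1),
        ((bernoulli i : ℚ) : ZMod p) * (((p - 1).choose i : ℕ) : ZMod p) *
          ((p - 1 : ℕ) : ZMod p)⁻¹ * (w : ZMod p) ^ (p - 3 + (p - 1 - i)) := by
    intro w hw
    obtain ⟨hw1, hw2⟩ := Finset.mem_Icc.1 hw
    have hwne : (w : ZMod p) ≠ 0 := by
      intro h
      have := Nat.le_of_dvd (by omega) ((ZMod.natCast_eq_zero_iff w p).1 h)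
      omega
    rw [inv_sq_eq_pow p hp2 _ hwne, hHs w, Finset.mul_sum]
    refine Finset.sum_congr rfl (fun i _ => ?_)
    push_cast
    rw [pow_add]
    ring
  rw [Finset.sum_congr rfl hstep, Finset.sum_comm]
  have hout : ∀ i ∈ range (p - 1),
      (∑ w ∈ Icc 1 (p - 1),
        ((bernoulli i : ℚ) : ZMod p) * (((p - 1).choose i : ℕ) : ZMod p) *
          ((p - 1 : ℕ) : ZMod p)⁻¹ * (w : ZMod p) ^ (p - 3 + (p - 1 - i))) =
      if i = p - 3 then
        ((bernoulli i : ℚ) : ZMod p) * (((p - 1).choose i : ℕ) : ZMod p) *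
          ((p - 1 : ℕ) : ZMod p)⁻¹ * (-1) else 0 := by
    intro i hi
    rw [← Finset.mul_sum, Ti_eval p hp2 i (mem_range.1 hi), mul_ite, mul_zero]
  rw [Finset.sum_congr rfl hout, Finset.sum_ite_eq' (range (p - 1)) (p - 3),
    if_pos (mem_range.2 (by omega)), cast_p_sub_one, choose_cast_eq_one p hp2]
  rw [inv_neg, inv_one]
  ring

end StageC

end Core

def Zp' (n p : ℕ) : ℚ :=
  ∑ i ∈ Finset.Icc 1 n, ∑ j ∈ Finset.Icc 1 n, ∑ k ∈ Finset.Icc 1 n,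
    if i + j + k = n ∧ Nat.Coprime i p ∧ Nat.Coprime j p ∧ Nat.Coprime k p then
      1 / ((i : ℚ) * j * k)
    else 0

section Bridge

variable (p : ℕ) [hpI : Fact p.Prime]

lemma Zp_bridge (n : ℕ) : gd p (Zp' n p) ∧ ((Zp' n p : ℚ) : ZMod p) = Zm p n := by
  have hco : ∀ i : ℕ, Nat.Coprime i p ↔ ¬ p ∣ i := fun i => by
    rw [Nat.coprime_comm]
    exact hpI.out.coprime_iff_not_dvd
  have hterm : ∀ i j k : ℕ,
      gd p (if i + j + k = n ∧ Nat.Coprime i p ∧ Nat.Coprime j p ∧ Nat.Coprime k p then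
          1 / ((i : ℚ) * j * k) else 0) ∧
      (((if i + j + k = n ∧ Nat.Coprime i p ∧ Nat.Coprime j p ∧ Nat.Coprime k p then
          1 / ((i : ℚ) * j * k) else 0) : ℚ) : ZMod p) =
        (if i + j + k = n ∧ ¬ p ∣ i ∧ ¬ p ∣ j ∧ ¬ p ∣ k then
          ((i : ZMod p) * (j : ZMod p) * (k : ZMod p))⁻¹ else 0) := by
    intro i j k
    by_cases hc : i + j + k = n ∧ Nat.Coprime i p ∧ Nat.Coprime j p ∧ Nat.Coprime k p
    · obtain ⟨h1, h2, h3, h4⟩ := hc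
      have hd2 : ¬ p ∣ i := (hco i).1 h2
      have hd3 : ¬ p ∣ j := (hco j).1 h3
      have hd4 : ¬ p ∣ k := (hco k).1 h4
      have hdvd : ¬ p ∣ (i * j * k) := by
        intro h
        rcases (Nat.Prime.dvd_mul hpI.out).1 h with h' | h'
        · rcases (Nat.Prime.dvd_mul hpI.out).1 h' with h'' | h''
          · exact hd2 h''
          · exact hd3 h''
        · exact hd4 h'
      have hval : 1 / ((i : ℚ) * j * k) = ((i * j * k : ℕ) : ℚ)⁻¹ := by
        push_cast
        rw [one_div]
      rw [if_pos ⟨h1, h2, h3, h4⟩, if_pos ⟨h1, hd2, hd3, hd4⟩, hval]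
      constructor
      · exact gd_inv_nat p hdvd
      · rw [Rat.cast_inv_nat]
        push_cast
        ring_nf
    · have hc' : ¬ (i + j + k = n ∧ ¬ p ∣ i ∧ ¬ p ∣ j ∧ ¬ p ∣ k) := by
        intro ⟨h1, h2, h3, h4⟩
        exact hc ⟨h1, (hco i).2 h2, (hco j).2 h3, (hco k).2 h4⟩
      rw [if_neg hc, if_neg hc']
      refine ⟨?_, by rw [Rat.cast_zero]⟩
      have := gd_nat p 0
      simpa using this
  have hinner : ∀ i j : ℕ,
      gd p (∑ k ∈ Icc 1 n, if i + j + k = n ∧ Nat.Coprime i p ∧ Nat.Coprime j p ∧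
          Nat.Coprime k p then 1 / ((i : ℚ) * j * k) else 0) ∧
      ((∑ k ∈ Icc 1 n, if i + j + k = n ∧ Nat.Coprime i p ∧ Nat.Coprime j p ∧
          Nat.Coprime k p then 1 / ((i : ℚ) * j * k) else 0 : ℚ) : ZMod p) =
        ∑ k ∈ Icc 1 n, (if i + j + k = n ∧ ¬ p ∣ i ∧ ¬ p ∣ j ∧ ¬ p ∣ k then
          ((i : ZMod p) * (j : ZMod p) * (k : ZMod p))⁻¹ else 0) := by
    intro i j
    obtain ⟨hg, hc⟩ := gd_sum p (Icc 1 n) _ (fun k _ => (hterm i j k).1)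
    exact ⟨hg, by rw [hc]; exact Finset.sum_congr rfl (fun k _ => (hterm i j k).2)⟩
  have hmid : ∀ i : ℕ,
      gd p (∑ j ∈ Icc 1 n, ∑ k ∈ Icc 1 n, if i + j + k = n ∧ Nat.Coprime i p ∧
          Nat.Coprime j p ∧ Nat.Coprime k p then 1 / ((i : ℚ) * j * k) else 0) ∧
      ((∑ j ∈ Icc 1 n, ∑ k ∈ Icc 1 n, if i + j + k = n ∧ Nat.Coprime i p ∧
          Nat.Coprime j p ∧ Nat.Coprime k p then 1 / ((i : ℚ) * j * k) else 0 : ℚ) : ZMod p) =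
        ∑ j ∈ Icc 1 n, ∑ k ∈ Icc 1 n, (if i + j + k = n ∧ ¬ p ∣ i ∧ ¬ p ∣ j ∧ ¬ p ∣ k then
          ((i : ZMod p) * (j : ZMod p) * (k : ZMod p))⁻¹ else 0) := by
    intro i
    obtain ⟨hg, hc⟩ := gd_sum p (Icc 1 n) _ (fun j _ => (hinner i j).1)
    exact ⟨hg, by rw [hc]; exact Finset.sum_congr rfl (fun j _ => (hinner i j).2)⟩
  obtain ⟨hg, hc⟩ := gd_sum p (Icc 1 n) _ (fun i _ => (hmid i).1)
  constructor
  · exact hg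
  · unfold Zp' Zm
    rw [hc]
    exact Finset.sum_congr rfl (fun i _ => (hmid i).2)

end Bridge


lemma Zp'_eq (n p : ℕ) : Zp n p = Zp' n p := rfl

theorem two_triple_sums_congr (p q : ℕ) (hp : p.Prime) (hq : q.Prime) (hp2 : p ≠ 2)
    (hq2 : q ≠ 2) (hpq : p ≠ q) :
    ratCong p (Zp (p * q) p + (2 / (q : ℚ) ^ 3) * Zp p p)
      (-2 * ((q : ℚ) + 2 / (q : ℚ) ^ 3) * bernoulli (p - 3)) := by
  haveI : Fact p.Prime := ⟨hp⟩
  have h3 : 3 ≤ p := hp.two_le.lt_of_ne (Ne.symm hp2)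
  have hpq' : ¬ p ∣ q := fun h => hpq ((Nat.prime_dvd_prime_iff_eq hp hq).1 h)
  have hpq3 : ¬ p ∣ q ^ 3 := fun h => hpq' (hp.dvd_of_dvd_pow h)
  have hqF : ((q : ℕ) : ZMod p) ≠ 0 := fun h =>
    hpq' ((ZMod.natCast_eq_zero_iff q p).1 h)
  have g2 : gd p (2 : ℚ) := by
    have := gd_nat p 2
    push_cast at this
    exact this
  have gm2 : gd p (-2 : ℚ) := by
    have := gd_int p (-2)
    push_cast at this
    exact this
  set X : ℚ := Zp (p * q) p + (2 / (q : ℚ) ^ 3) * Zp p p with hX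
  set Y : ℚ := -2 * ((q : ℚ) + 2 / (q : ℚ) ^ 3) * bernoulli (p - 3) with hY
  -- the factor 2 / q^3
  have hfac_eq : (2 / (q : ℚ) ^ 3) = 2 * ((q ^ 3 : ℕ) : ℚ)⁻¹ := by
    push_cast
    rw [div_eq_mul_inv]
  have gfac : gd p (2 / (q : ℚ) ^ 3) := by
    rw [hfac_eq]
    exact gd_mul p g2 (gd_inv_nat p hpq3)
  have cfac : ((2 / (q : ℚ) ^ 3 : ℚ) : ZMod p) = 2 * (((q : ZMod p)) ^ 3)⁻¹ := by
    rw [hfac_eq, gd_cast_mul p g2 (gd_inv_nat p hpq3), Rat.cast_inv_nat, Rat.cast_ofNat]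
    push_cast
    ring
  -- goodness of X and Y
  have gZ1 := Zp_bridge p (p * q)
  have gZ2 := Zp_bridge p p
  rw [← Zp'_eq] at gZ1 gZ2
  have gB : gd p (bernoulli (p - 3)) := gd_bernoulli p (p - 3) (by omega)
  have gX : gd p X := gd_add p gZ1.1 (gd_mul p gfac gZ2.1)
  have gY : gd p Y :=
    gd_mul p (gd_mul p gm2 (gd_add p (gd_nat p q) gfac)) gB
  -- casts
  have cX : ((X : ℚ) : ZMod p) =
      Zm p (p * q) + (2 * (((q : ZMod p)) ^ 3)⁻¹) * Zm p p := by
    rw [hX, gd_cast_add p gZ1.1 (gd_mul p gfac gZ2.1),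
      gd_cast_mul p gfac gZ2.1, cfac, gZ1.2, gZ2.2]
  have cY : ((Y : ℚ) : ZMod p) =
      -2 * ((q : ZMod p) + 2 * (((q : ZMod p)) ^ 3)⁻¹) * ((bernoulli (p - 3) : ℚ) : ZMod p) := by
    rw [hY, gd_cast_mul p (gd_mul p gm2 (gd_add p (gd_nat p q) gfac)) gB,
      gd_cast_mul p gm2 (gd_add p (gd_nat p q) gfac),
      gd_cast_add p (gd_nat p q) gfac, cfac]
    push_cast
    ring
  -- the main computation
  have main : ((X : ℚ) : ZMod p) = ((Y : ℚ) : ZMod p) := by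
    rw [cX, cY]
    have e1 : Zm p (p * q) = -(2 * (q : ZMod p) * Dd p) := L4 p hp2 q
    have e2 : Zm p p = -(2 * ((1 : ℕ) : ZMod p) * Dd p) := by
      have := L4 p hp2 1
      rwa [Nat.mul_one] at this
    rw [e1, e2, Dd_eq_bernoulli p hp2]
    push_cast
    ring
  constructor
  · have := gd_sub p gX gY
    exact Nat.Coprime.symm ((hp.coprime_iff_not_dvd).2 this)
  · have h0 : ((X - Y : ℚ) : ZMod p) = 0 := by
      rw [gd_cast_sub p gX gY, main, sub_self]
    rw [Rat.cast_def] at h0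
    have hden : (((X - Y).den : ℕ) : ZMod p) ≠ 0 := gd_den_ne_zero p (gd_sub p gX gY)
    have hnum : (((X - Y).num : ℤ) : ZMod p) = 0 := by
      rcases mul_eq_zero.1 (by rwa [div_eq_mul_inv] at h0) with h | h
      · exact h
      · exact absurd (inv_eq_zero.1 h) hden
    exact (ZMod.intCast_zmod_eq_zero_iff_dvd _ p).1 hnum
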